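/- arXiv:1311.3217 — 5 statements merged into one kernel-verified Lean document; each statement's English description precedes it below -/
import Mathlib

section
/- Let I ⊆ ℝ be an open interval with 0 ∉ I, let ℏ ∈ ℂ be nonzero, let θ₀, θ₁, θ∞ ∈ ℂ, and let z, y, u : I → ℂ be differentiable functions with y(t) ≠ 0 for all t ∈ I, satisfying the Painlevé 5 differential system. Define σ(t) = −2z(t)² − z(t)(2θ₀+θ∞+t) + y(t)z(t)(z(t)+(θ₀−θ₁+θ∞)/2) + ((z(t)+θ₀)/y(t))(z(t)+(θ₀+θ₁+θ∞)/2). Then σ is differentiable on I and σ′(t) = −z(t) for all t ∈ I. -/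
set_option maxHeartbeats 1000000 in
/-- If (z, y, u) solves the Painlevé 5 differential system on an open interval I
not containing 0, and σ is the associated σ-function, then σ is differentiable on I
and σ′(t) = −z(t). -/
theorem statement1
    (I : Set ℝ) (hIopen : IsOpen I) (hIconn : I.OrdConnected) (hI0 : (0 : ℝ) ∉ I)
    (ℏ : ℂ) (hℏ : ℏ ≠ 0) (θ₀ θ₁ θinf : ℂ)
    (z y u : ℝ → ℂ)
    (hz : ∀ t ∈ I, DifferentiableAt ℝ z t)
    (hy : ∀ t ∈ I, DifferentiableAt ℝ y t)
    (hu : ∀ t ∈ I, DifferentiableAt ℝ u t)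
    (hy0 : ∀ t ∈ I, y t ≠ 0)
    (hsys : ∀ t ∈ I,
      (-(Real.pi : ℂ) * ℏ * (t : ℂ) * deriv y t
        = (t : ℂ) * y t - 2 * z t * (y t - 1) ^ 2
          - (y t - 1) * ((θ₀ - θ₁ + θinf) / 2 * y t - (3 * θ₀ + θ₁ + θinf) / 2))
      ∧ (-(Real.pi : ℂ) * ℏ * (t : ℂ) * deriv z t
        = y t * z t * (z t + (θ₀ - θ₁ + θinf) / 2)
          - (1 / y t) * (z t + θ₀) * (z t + (θ₀ + θ₁ + θinf) / 2))
      ∧ (-(Real.pi : ℂ) * ℏ * (t : ℂ) * deriv u t / u t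
        = -2 * z t - θ₀ + y t * (z t + (θ₀ - θ₁ + θinf) / 2)
          + (1 / y t) * (z t + (θ₀ + θ₁ + θinf) / 2)))
    (σ : ℝ → ℂ)
    (hσ : ∀ t : ℝ, σ t = -2 * z t ^ 2 - z t * (2 * θ₀ + θinf + (t : ℂ))
        + y t * z t * (z t + (θ₀ - θ₁ + θinf) / 2)
        + ((z t + θ₀) / y t) * (z t + (θ₀ + θ₁ + θinf) / 2)) :
    ∀ t ∈ I, DifferentiableAt ℝ σ t ∧ deriv σ t = -z t := by
  intro t ht
  have htne : t ≠ 0 := fun h => hI0 (h ▸ ht)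
  have ht0 : (t : ℂ) ≠ 0 := Complex.ofReal_ne_zero.2 htne
  have hπ : (Real.pi : ℂ) ≠ 0 := Complex.ofReal_ne_zero.2 Real.pi_ne_zero
  have hc : -(Real.pi : ℂ) * ℏ * (t : ℂ) ≠ 0 := by
    simp [hπ, hℏ, ht0]
  have hyt : y t ≠ 0 := hy0 t ht
  obtain ⟨e1, e2, -⟩ := hsys t ht
  have hzD : HasDerivAt z (deriv z t) t := (hz t ht).hasDerivAt
  have hyD : HasDerivAt y (deriv y t) t := (hy t ht).hasDerivAt
  have ho : HasDerivAt (fun s : ℝ => (s : ℂ)) 1 t := by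
    simpa using (hasDerivAt_id t).ofReal_comp
  have hσf : σ = fun s : ℝ => -2 * (z s * z s)
      - (z s * (2 * θ₀ + θinf) + z s * (s : ℂ))
      + (y s * z s) * (z s + (θ₀ - θ₁ + θinf) / 2)
      + ((z s + θ₀) * (z s + (θ₀ + θ₁ + θinf) / 2)) / y s := by
    funext s; rw [hσ]; ring
  have h1 := (hzD.mul hzD).const_mul (-2 : ℂ)
  have h2 := (hzD.mul_const (2 * θ₀ + θinf)).add
    ((hzD.mul ho).add_const 0)
  have h3 := (hyD.mul hzD).mul (hzD.add_const ((θ₀ - θ₁ + θinf) / 2))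
  have h4 := ((hzD.add_const θ₀).mul (hzD.add_const ((θ₀ + θ₁ + θinf) / 2))).div hyD hyt
  have h2' := (hzD.mul_const (2 * θ₀ + θinf)).add (hzD.mul ho)
  have hD := ((h1.sub h2').add h3).add h4
  rw [hσf]
  refine ⟨hD.differentiableAt, ?_⟩
  refine hD.deriv.trans ?_
  simp only [Pi.mul_apply]
  have hb1 : y t * (1 / y t) = 1 := by field_simp
  have e2' : -(Real.pi : ℂ) * ℏ * (t : ℂ) * (y t * deriv z t)
      = y t ^ 2 * z t * (z t + (θ₀ - θ₁ + θinf) / 2)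
        - (z t + θ₀) * (z t + (θ₀ + θ₁ + θinf) / 2) := by
    linear_combination y t * e2 - ((z t + θ₀) * (z t + (θ₀ + θ₁ + θinf) / 2)) * hb1
  apply mul_left_cancel₀ (mul_ne_zero (mul_ne_zero hyt hyt) hc)
  linear_combination (y t * (-4 * z t - (2 * θ₀ + θinf) - (t : ℂ)
        + y t * (2 * z t + (θ₀ - θ₁ + θinf) / 2)) + 2 * z t + (θ₀ + θ₁ + θinf) / 2 + θ₀) * e2'
    + (y t ^ 2 * z t * (z t + (θ₀ - θ₁ + θinf) / 2)
        - (z t + θ₀) * (z t + (θ₀ + θ₁ + θinf) / 2)) * e1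
    + (((deriv z t * (z t + (θ₀ + θ₁ + θinf) / 2) + (z t + θ₀) * deriv z t) * y t
        - (z t + θ₀) * (z t + (θ₀ + θ₁ + θinf) / 2) * deriv y t)
        * (y t * (1 / y t) + 1) * (-(Real.pi : ℂ) * ℏ * (t : ℂ))) * hb1
end

section
/- Let I ⊆ ℝ be an open interval with 0 ∉ I, let ℏ ∈ ℂ be nonzero, let θ₀, θ₁, θ∞ ∈ ℂ, and let z, y, u : I → ℂ be functions with y nonvanishing, z twice differentiable and y differentiable, satisfying the Painlevé 5 differential system. Define σ(t) = −2z(t)² − z(t)(2θ₀+θ∞+t) + y(t)z(t)(z(t)+(θ₀−θ₁+θ∞)/2) + ((z(t)+θ₀)/y(t))(z(t)+(θ₀+θ₁+θ∞)/2). Then σ is twice differentiable and satisfies the σ-form of the Painlevé 5 equation on I: −(πℏ t σ″)² + (σ + 2(σ′)² − (2θ₀+θ∞+t)σ′)² = 4σ′(σ′−θ₀)(σ′ − (θ₀−θ₁+θ∞)/2)(σ′ − (θ₀+θ₁+θ∞)/2). -/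
private lemma hasDerivAt_ofReal' (t : ℝ) : HasDerivAt (fun s : ℝ => (s : ℂ)) 1 t := by
  simpa using (hasDerivAt_id t).ofReal_comp

/-- Derivative of the sigma combination, for generic constants. -/
private lemma sigma_hasDerivAt (z y : ℝ → ℂ) (A B C D : ℂ) (t : ℝ) (zt' yt' : ℂ)
    (hz : HasDerivAt z zt' t) (hy : HasDerivAt y yt' t) (hy0 : y t ≠ 0) :
    HasDerivAt (fun s : ℝ =>
        -2 * z s ^ 2 - z s * (C + (s : ℂ)) + y s * z s * (z s + A)
          + ((z s + D) / y s) * (z s + B))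
      (-2 * (zt' * z t + z t * zt') - (zt' * (C + (t : ℂ)) + z t)
        + ((yt' * z t + y t * zt') * (z t + A) + y t * z t * zt')
        + (((zt' * y t - (z t + D) * yt') / (y t) ^ 2) * (z t + B)
            + ((z t + D) / y t) * zt')) t := by
  have h1 : HasDerivAt (fun s : ℝ => -2 * z s ^ 2) (-2 * (zt' * z t + z t * zt')) t := by
    have : HasDerivAt (fun s : ℝ => -2 * (z s * z s)) (-2 * (zt' * z t + z t * zt')) t :=
      (hz.mul hz).const_mul (-2 : ℂ)
    simpa only [← pow_two] using this
  have h2 : HasDerivAt (fun s : ℝ => z s * (C + (s : ℂ))) (zt' * (C + (t : ℂ)) + z t) t := by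
    have : HasDerivAt (fun s : ℝ => z s * (C + (s : ℂ))) (zt' * (C + (t : ℂ)) + z t * 1) t :=
      hz.mul ((hasDerivAt_ofReal' t).const_add C)
    simpa only [mul_one] using this
  have h3 : HasDerivAt (fun s : ℝ => y s * z s * (z s + A))
      ((yt' * z t + y t * zt') * (z t + A) + y t * z t * zt') t := by
    have := (hy.mul hz).mul (hz.add_const A)
    exact this
  have h4 : HasDerivAt (fun s : ℝ => ((z s + D) / y s) * (z s + B))
      (((zt' * y t - (z t + D) * yt') / (y t) ^ 2) * (z t + B) + ((z t + D) / y t) * zt') t := by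
    have := ((hz.add_const D).div hy hy0).mul (hz.add_const B)
    exact this
  exact ((h1.sub h2).add h3).add h4

set_option maxHeartbeats 2000000 in
/-- If (z, y, u) solves the Painlevé 5 differential system on an open interval I
not containing 0, with z twice differentiable and y, u differentiable, then the
associated σ-function is twice differentiable and satisfies the σ-form of the
Painlevé 5 equation on I. -/
theorem statement2
    (I : Set ℝ) (hIopen : IsOpen I) (hIconn : I.OrdConnected) (hI0 : (0 : ℝ) ∉ I)
    (ℏ : ℂ) (hℏ : ℏ ≠ 0) (θ₀ θ₁ θinf : ℂ)
    (z y u : ℝ → ℂ)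
    (hz : ∀ t ∈ I, DifferentiableAt ℝ z t)
    (hz' : ∀ t ∈ I, DifferentiableAt ℝ (deriv z) t)
    (hy : ∀ t ∈ I, DifferentiableAt ℝ y t)
    (hu : ∀ t ∈ I, DifferentiableAt ℝ u t)
    (hy0 : ∀ t ∈ I, y t ≠ 0)
    (hsys : ∀ t ∈ I,
      (-(Real.pi : ℂ) * ℏ * (t : ℂ) * deriv y t
        = (t : ℂ) * y t - 2 * z t * (y t - 1) ^ 2
          - (y t - 1) * ((θ₀ - θ₁ + θinf) / 2 * y t - (3 * θ₀ + θ₁ + θinf) / 2))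
      ∧ (-(Real.pi : ℂ) * ℏ * (t : ℂ) * deriv z t
        = y t * z t * (z t + (θ₀ - θ₁ + θinf) / 2)
          - (1 / y t) * (z t + θ₀) * (z t + (θ₀ + θ₁ + θinf) / 2))
      ∧ (-(Real.pi : ℂ) * ℏ * (t : ℂ) * deriv u t / u t
        = -2 * z t - θ₀ + y t * (z t + (θ₀ - θ₁ + θinf) / 2)
          + (1 / y t) * (z t + (θ₀ + θ₁ + θinf) / 2)))
    (σ : ℝ → ℂ)
    (hσ : ∀ t : ℝ, σ t = -2 * z t ^ 2 - z t * (2 * θ₀ + θinf + (t : ℂ))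
        + y t * z t * (z t + (θ₀ - θ₁ + θinf) / 2)
        + ((z t + θ₀) / y t) * (z t + (θ₀ + θ₁ + θinf) / 2)) :
    ∀ t ∈ I, DifferentiableAt ℝ σ t ∧ DifferentiableAt ℝ (deriv σ) t ∧
      -((Real.pi : ℂ) * ℏ * (t : ℂ) * deriv (deriv σ) t) ^ 2
        + (σ t + 2 * (deriv σ t) ^ 2 - (2 * θ₀ + θinf + (t : ℂ)) * deriv σ t) ^ 2
      = 4 * deriv σ t * (deriv σ t - θ₀) * (deriv σ t - (θ₀ - θ₁ + θinf) / 2)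
          * (deriv σ t - (θ₀ + θ₁ + θinf) / 2) := by
  have hσfun : σ = fun s : ℝ => -2 * z s ^ 2 - z s * (2 * θ₀ + θinf + (s : ℂ))
      + y s * z s * (z s + (θ₀ - θ₁ + θinf) / 2)
      + ((z s + θ₀) / y s) * (z s + (θ₀ + θ₁ + θinf) / 2) := funext hσ
  have hπ : (Real.pi : ℂ) ≠ 0 := Complex.ofReal_ne_zero.mpr Real.pi_ne_zero
  -- key: HasDerivAt σ (-(z s)) s for s ∈ I
  have key : ∀ s ∈ I, HasDerivAt σ (-(z s)) s := by
    intro s hs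
    have hsne : s ≠ 0 := by rintro rfl; exact hI0 hs
    have hs0 : (s : ℂ) ≠ 0 := Complex.ofReal_ne_zero.mpr hsne
    have hys := hy0 s hs
    have hne : -(Real.pi : ℂ) * ℏ * (s : ℂ) ≠ 0 := by
      simp [hπ, hℏ, hs0]
    have e1 := (hsys s hs).1
    have e2 := (hsys s hs).2.1
    have hyt : deriv y s = ((s : ℂ) * y s - 2 * z s * (y s - 1) ^ 2
        - (y s - 1) * ((θ₀ - θ₁ + θinf) / 2 * y s - (3 * θ₀ + θ₁ + θinf) / 2))
          / (-(Real.pi : ℂ) * ℏ * (s : ℂ)) := by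
      rw [eq_div_iff hne]; linear_combination e1
    have hzt : deriv z s = (y s * z s * (z s + (θ₀ - θ₁ + θinf) / 2)
        - (1 / y s) * (z s + θ₀) * (z s + (θ₀ + θ₁ + θinf) / 2))
          / (-(Real.pi : ℂ) * ℏ * (s : ℂ)) := by
      rw [eq_div_iff hne]; linear_combination e2
    have H := sigma_hasDerivAt z y ((θ₀ - θ₁ + θinf) / 2) ((θ₀ + θ₁ + θinf) / 2)
      (2 * θ₀ + θinf) θ₀ s (deriv z s) (deriv y s)
      (hz s hs).hasDerivAt (hy s hs).hasDerivAt hys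
    rw [← hσfun] at H
    convert H using 1
    have hy2 : (y s)^2 ≠ 0 := pow_ne_zero 2 hys
    have e2' : -(Real.pi:ℂ) * ℏ * (s:ℂ) * deriv z s * y s
        = (y s)^2 * z s * (z s + (θ₀ - θ₁ + θinf) / 2)
          - (z s + θ₀) * (z s + (θ₀ + θ₁ + θinf) / 2) := by
      rw [e2]; field_simp
    rw [show -2 * (deriv z s * z s + z s * deriv z s)
          - (deriv z s * (2 * θ₀ + θinf + (s:ℂ)) + z s)
          + ((deriv y s * z s + y s * deriv z s) * (z s + (θ₀ - θ₁ + θinf) / 2)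
              + y s * z s * deriv z s)
          + ((deriv z s * y s - (z s + θ₀) * deriv y s) / (y s) ^ 2 * (z s + (θ₀ + θ₁ + θinf) / 2)
              + (z s + θ₀) / y s * deriv z s)
        = ((y s)^2 * (-2 * (deriv z s * z s + z s * deriv z s)
            - (deriv z s * (2 * θ₀ + θinf + (s:ℂ)) + z s)
            + ((deriv y s * z s + y s * deriv z s) * (z s + (θ₀ - θ₁ + θinf) / 2)
                + y s * z s * deriv z s))
           + (deriv z s * y s - (z s + θ₀) * deriv y s) * (z s + (θ₀ + θ₁ + θinf) / 2)
           + y s * (z s + θ₀) * deriv z s) / (y s)^2 from by field_simp; ring,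
      eq_div_iff hy2]
    apply mul_left_cancel₀ hne
    linear_combination (-((y s)^2 * z s * (z s + (θ₀ - θ₁ + θinf) / 2)
        - (z s + θ₀) * (z s + (θ₀ + θ₁ + θinf) / 2))) * e1
      + (-(-4 * z s * y s - (2 * θ₀ + θinf + (s:ℂ)) * y s
          + (y s)^2 * (2 * z s + (θ₀ - θ₁ + θinf) / 2)
          + (z s + (θ₀ + θ₁ + θinf) / 2) + (z s + θ₀))) * e2'
  have hderiv : ∀ s ∈ I, deriv σ s = -(z s) := fun s hs => (key s hs).deriv
  intro t ht
  have htne : t ≠ 0 := by rintro rfl; exact hI0 ht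
  have hs0 : (t : ℂ) ≠ 0 := Complex.ofReal_ne_zero.mpr htne
  have hys := hy0 t ht
  have hne : -(Real.pi : ℂ) * ℏ * (t : ℂ) ≠ 0 := by
    simp [hπ, hℏ, hs0]
  have hev : deriv σ =ᶠ[nhds t] fun s => -(z s) := by
    filter_upwards [hIopen.mem_nhds ht] with s hs using hderiv s hs
  have hdz : DifferentiableAt ℝ (fun s => -(z s)) t := (hz t ht).neg
  have hdiff2 : DifferentiableAt ℝ (deriv σ) t := hdz.congr_of_eventuallyEq hev
  have hdd : deriv (deriv σ) t = -(deriv z t) := by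
    rw [hev.deriv_eq]
    exact ((hz t ht).hasDerivAt.neg).deriv
  refine ⟨(key t ht).differentiableAt, hdiff2, ?_⟩
  rw [hdd, hderiv t ht, hσ t]
  have e2 := (hsys t ht).2.1
  have hG : (Real.pi:ℂ) * ℏ * (t:ℂ) * -deriv z t
      = y t * z t * (z t + (θ₀ - θ₁ + θinf) / 2)
        - 1 / y t * (z t + θ₀) * (z t + (θ₀ + θ₁ + θinf) / 2) := by
    linear_combination e2
  rw [hG]
  field_simp
  ring
end

section
/- Let I ⊆ ℝ be an open interval with 0 ∉ I, let ℏ ∈ ℂ be nonzero, and let z, y, u : I → ℂ be functions with y nonvanishing, z twice differentiable and y differentiable, satisfying the Painlevé 5 differential system with all monodromies vanishing (θ₀ = θ₁ = θ∞ = 0): −πℏ t y′ = t y − 2z(y−1)², −πℏ t z′ = y z² − z²/y, −πℏ t u′/u = −2z + yz + z/y. Define σ(t) = −2z(t)² − t z(t) + y(t)z(t)² + z(t)²/y(t). Then σ satisfies the Chazy-type equation −(πℏ t σ″(t))² + (t σ′(t) − σ(t))(t σ′(t) − σ(t) − 4σ′(t)²) = 0 for all t ∈ I. -/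
/-- If (z, y, u) solves the Painlevé 5 differential system with vanishing
monodromies on an open interval I not containing 0, with z twice differentiable
and y, u differentiable, then σ = −2z² − tz + yz² + z²/y satisfies the
Chazy-type equation −(πℏtσ″)² + (tσ′−σ)(tσ′−σ−4σ′²) = 0 on I. -/
theorem statement3
    (I : Set ℝ) (hIopen : IsOpen I) (hIconn : I.OrdConnected) (hI0 : (0 : ℝ) ∉ I)
    (ℏ : ℂ) (hℏ : ℏ ≠ 0)
    (z y u : ℝ → ℂ)
    (hz : ∀ t ∈ I, DifferentiableAt ℝ z t)
    (hz' : ∀ t ∈ I, DifferentiableAt ℝ (deriv z) t)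
    (hy : ∀ t ∈ I, DifferentiableAt ℝ y t)
    (hu : ∀ t ∈ I, DifferentiableAt ℝ u t)
    (hy0 : ∀ t ∈ I, y t ≠ 0)
    (hsys : ∀ t ∈ I,
      (-(Real.pi : ℂ) * ℏ * (t : ℂ) * deriv y t
        = (t : ℂ) * y t - 2 * z t * (y t - 1) ^ 2)
      ∧ (-(Real.pi : ℂ) * ℏ * (t : ℂ) * deriv z t = y t * z t ^ 2 - z t ^ 2 / y t)
      ∧ (-(Real.pi : ℂ) * ℏ * (t : ℂ) * deriv u t / u t
        = -2 * z t + y t * z t + z t / y t))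
    (σ : ℝ → ℂ)
    (hσ : ∀ t : ℝ, σ t = -2 * z t ^ 2 - (t : ℂ) * z t + y t * z t ^ 2 + z t ^ 2 / y t) :
    ∀ t ∈ I,
      -((Real.pi : ℂ) * ℏ * (t : ℂ) * deriv (deriv σ) t) ^ 2
        + ((t : ℂ) * deriv σ t - σ t)
          * ((t : ℂ) * deriv σ t - σ t - 4 * (deriv σ t) ^ 2) = 0 := by
  have hσfun : σ = fun s : ℝ => -2 * z s ^ 2 - (s : ℂ) * z s + y s * z s ^ 2 + z s ^ 2 / y s :=
    funext hσ
  have hpi : ((Real.pi : ℝ) : ℂ) ≠ 0 := by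
    exact_mod_cast Real.pi_ne_zero
  have key : ∀ t ∈ I, deriv σ t = -z t := by
    intro t ht
    have htr : (t : ℝ) ≠ 0 := fun h => hI0 (h ▸ ht)
    have ht0 : (t : ℂ) ≠ 0 := Complex.ofReal_ne_zero.mpr htr
    have hc : -(Real.pi : ℂ) * ℏ * (t : ℂ) ≠ 0 := by
      simp [hpi, hℏ, ht0]
    have hyt0 := hy0 t ht
    obtain ⟨eq1, eq2, _⟩ := hsys t ht
    have hzt := (hz t ht).hasDerivAt
    have hyt := (hy t ht).hasDerivAt
    have hT : HasDerivAt (fun s : ℝ => (s : ℂ)) 1 t := by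
      exact Complex.ofRealCLM.hasDerivAt (x := t)
    have hsq : HasDerivAt (fun s => z s ^ 2) (2 * z t * deriv z t) t := by
      have h : HasDerivAt (fun s => z s * z s) _ t := hzt.mul hzt
      simp only [pow_two]
      convert h using 1
      ring
    have hD := (((hsq.const_mul (-2 : ℂ)).sub (hT.mul hzt)).add
      (hyt.mul hsq)).add (hsq.div hyt hyt0)
    have hw : y t * (y t)⁻¹ = 1 := mul_inv_cancel₀ hyt0
    rw [div_eq_mul_inv] at eq2
    refine mul_left_cancel₀ hc ?_
    have hD' : HasDerivAt (fun s : ℝ => -2 * z s ^ 2 - (s : ℂ) * z s + y s * z s ^ 2 + z s ^ 2 / y s) _ t := hD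
    rw [hσfun, hD'.deriv]
    rw [div_eq_mul_inv, ← inv_pow]
    linear_combination
      (-4 * z t - (t : ℂ) + 2 * y t * z t + 2 * z t * y t * ((y t)⁻¹) ^ 2) * eq2
      + (z t ^ 2 - z t ^ 2 * ((y t)⁻¹) ^ 2) * eq1
      + (2 * z t ^ 3 - (t : ℂ) * (y t)⁻¹ * z t ^ 2 - 4 * (y t)⁻¹ * z t ^ 3
        - 2 * ((y t)⁻¹) ^ 2 * z t ^ 3 + 4 * y t * (y t)⁻¹ * z t ^ 3) * hw
  intro t ht
  have htr : (t : ℝ) ≠ 0 := fun h => hI0 (h ▸ ht)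
  have ht0 : (t : ℂ) ≠ 0 := Complex.ofReal_ne_zero.mpr htr
  have hyt0 := hy0 t ht
  obtain ⟨eq1, eq2, _⟩ := hsys t ht
  have hev : deriv σ =ᶠ[nhds t] fun s => -z s := by
    filter_upwards [hIopen.mem_nhds ht] with s hs using key s hs
  have h2 : deriv (deriv σ) t = -deriv z t := by
    rw [hev.deriv_eq, deriv.fun_neg]
  rw [h2, key t ht, hσ t]
  have h3 : (Real.pi : ℂ) * ℏ * (t : ℂ) * -deriv z t = y t * z t ^ 2 - z t ^ 2 / y t := by
    linear_combination eq2
  rw [h3]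
  field_simp [hyt0]
  ring
end

section
/- Let (σₖ)ₖ≥0 be the sequence of rational numbers defined by σ₀ = 1/16 and, for all k ≥ 1, σₖ = 16 Σ_{j=0}^{k−1} (2−2j)(1−2j)(4+2j−2k)(3+2j−2k) σⱼ σ_{k−j−1} − 16 Σ_{i=1}^{k−1} (2i−1)(1−2k+2i) σᵢ σ_{k−i} − 64 Σ_{i=1}^{k−1} Σ_{j=0}^{i} (2−2j)(2−2i+2j)(1−2k+2i) σⱼ σ_{i−j} σ_{k−i}. Then for every k ≥ 2, σₖ is an integer. -/
private def SInt (x : ℚ) : Prop := ∃ m : ℤ, x = (m : ℚ)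

private lemma sInt_sum {s : Finset ℕ} {f : ℕ → ℚ} (h : ∀ x ∈ s, SInt (f x)) :
    SInt (∑ x ∈ s, f x) := by
  have hmem : (∑ x ∈ s, f x) ∈ (Int.castRingHom ℚ).range := by
    refine Subring.sum_mem _ fun x hx => ?_
    obtain ⟨m, hm⟩ := h x hx
    exact ⟨m, by simpa using hm.symm⟩
  obtain ⟨m, hm⟩ := hmem
  exact ⟨m, by simpa using hm.symm⟩

private lemma sInt_sub {x y : ℚ} (hx : SInt x) (hy : SInt y) : SInt (x - y) := by
  obtain ⟨m, hm⟩ := hx; obtain ⟨n, hn⟩ := hy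
  exact ⟨m - n, by rw [hm, hn]; push_cast; ring⟩

/-- For the recursively defined sequence of coefficients of the ℏ-expansion of the
Painlevé 5 σ-function, σₖ is an integer for every k ≥ 2. -/
theorem statement7 (σ : ℕ → ℚ)
    (h0 : σ 0 = 1 / 16)
    (hrec : ∀ k : ℕ, 1 ≤ k →
      σ k =
        16 * ∑ j ∈ Finset.range k,
            (2 - 2 * (j : ℚ)) * (1 - 2 * (j : ℚ)) * (4 + 2 * (j : ℚ) - 2 * (k : ℚ))
              * (3 + 2 * (j : ℚ) - 2 * (k : ℚ)) * σ j * σ (k - j - 1)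
        - 16 * ∑ i ∈ Finset.Icc 1 (k - 1),
            (2 * (i : ℚ) - 1) * (1 - 2 * (k : ℚ) + 2 * (i : ℚ)) * σ i * σ (k - i)
        - 64 * ∑ i ∈ Finset.Icc 1 (k - 1), ∑ j ∈ Finset.range (i + 1),
            (2 - 2 * (j : ℚ)) * (2 - 2 * (i : ℚ) + 2 * (j : ℚ))
              * (1 - 2 * (k : ℚ) + 2 * (i : ℚ)) * σ j * σ (i - j) * σ (k - i)) :
    ∀ k : ℕ, 2 ≤ k → ∃ m : ℤ, σ k = (m : ℚ) := by
  have h1 : σ 1 = 1 / 4 := by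
    have h1 := hrec 1 le_rfl
    norm_num [Finset.sum_range_one, h0] at h1
    exact h1
  intro k
  induction k using Nat.strong_induction_on with
  | _ k IH =>
  intro hk2
  show SInt (σ k)
  rw [hrec k (by omega)]
  simp only [Finset.mul_sum]
  refine sInt_sub (sInt_sub (sInt_sum ?_) (sInt_sum ?_)) (sInt_sum ?_)
  · -- first sum
    intro j hj
    rw [Finset.mem_range] at hj
    by_cases hj1 : j = 1
    · subst hj1
      exact ⟨0, by push_cast; ring⟩
    by_cases hjk2 : j = k - 2
    · have hk : k = j + 2 := by omega
      subst hk
      exact ⟨0, by push_cast; ring⟩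
    by_cases hj0 : j = 0
    · subst hj0
      have hk3 : 3 ≤ k := by omega
      obtain ⟨m, hm⟩ := IH (k - 1) (by omega) (by omega)
      have e1 : k - 0 - 1 = k - 1 := by omega
      refine ⟨2 * (4 - 2 * (k : ℤ)) * (3 - 2 * (k : ℤ)) * m, ?_⟩
      rw [e1, hm, h0]; push_cast; ring
    by_cases hjk1 : j = k - 1
    · have hk : k = j + 1 := by omega
      have hj2 : 2 ≤ j := by omega
      obtain ⟨m, hm⟩ := IH j (by omega) hj2
      have e1 : k - j - 1 = 0 := by omega
      refine ⟨(2 - 2 * (j : ℤ)) * (1 - 2 * (j : ℤ)) * 2 * 1 * m, ?_⟩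
      rw [e1, hm, h0, hk]; push_cast; ring
    · -- middle: 2 ≤ j ≤ k - 3
      obtain ⟨m, hm⟩ := IH j (by omega) (by omega)
      obtain ⟨n, hn⟩ := IH (k - j - 1) (by omega) (by omega)
      refine ⟨16 * (2 - 2 * (j : ℤ)) * (1 - 2 * (j : ℤ)) * (4 + 2 * (j : ℤ) - 2 * (k : ℤ))
        * (3 + 2 * (j : ℤ) - 2 * (k : ℤ)) * m * n, ?_⟩
      rw [hm, hn]; push_cast; ring
  · -- second sum
    intro i hi
    rw [Finset.mem_Icc] at hi
    by_cases hik : i = 1 ∧ k = 2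
    · obtain ⟨hi1, hk2'⟩ := hik
      subst hi1; subst hk2'
      exact ⟨-1, by norm_num [h1]⟩
    by_cases hi1 : i = 1
    · subst hi1
      have hk3 : 3 ≤ k := by omega
      obtain ⟨m, hm⟩ := IH (k - 1) (by omega) (by omega)
      refine ⟨4 * (1 - 2 * (k : ℤ) + 2) * m, ?_⟩
      rw [hm, h1]; push_cast; ring
    by_cases hik1 : i = k - 1
    · have hk : k = i + 1 := by omega
      obtain ⟨m, hm⟩ := IH i (by omega) (by omega)
      have e1 : k - i = 1 := by omega
      refine ⟨4 * (2 * (i : ℤ) - 1) * (1 - 2 * (k : ℤ) + 2 * (i : ℤ)) * m, ?_⟩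
      rw [e1, hm, h1]; push_cast; ring
    · obtain ⟨m, hm⟩ := IH i (by omega) (by omega)
      obtain ⟨n, hn⟩ := IH (k - i) (by omega) (by omega)
      refine ⟨16 * (2 * (i : ℤ) - 1) * (1 - 2 * (k : ℤ) + 2 * (i : ℤ)) * m * n, ?_⟩
      rw [hm, hn]; push_cast; ring
  · -- third sum
    intro i hi
    rw [Finset.mem_Icc] at hi
    refine sInt_sum ?_
    intro j hj
    rw [Finset.mem_range] at hj
    by_cases hj1 : j = 1
    · subst hj1
      exact ⟨0, by push_cast; ring⟩
    by_cases hji1 : j = i - 1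
    · have hi' : i = j + 1 := by omega
      subst hi'
      exact ⟨0, by push_cast; ring⟩
    -- now i ≥ 2, j ≠ 1, i - j ≠ 1
    have hi2 : 2 ≤ i := by omega
    by_cases hik1 : i = k - 1
    · have hk : k = i + 1 := by omega
      have e1 : k - i = 1 := by omega
      by_cases hj0 : j = 0
      · subst hj0
        obtain ⟨m, hm⟩ := IH i (by omega) hi2
        have e2 : i - 0 = i := by omega
        refine ⟨2 * (2 - 2 * (i : ℤ)) * (1 - 2 * (k : ℤ) + 2 * (i : ℤ)) * m, ?_⟩
        rw [e1, e2, hm, h0, h1]; push_cast; ring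
      by_cases hji : j = i
      · subst hji
        obtain ⟨m, hm⟩ := IH j (by omega) (by omega)
        have e2 : j - j = 0 := by omega
        refine ⟨2 * (2 - 2 * (j : ℤ)) * (1 - 2 * (k : ℤ) + 2 * (j : ℤ)) * m, ?_⟩
        rw [e1, e2, hm, h0, h1]; push_cast; ring
      · -- 2 ≤ j ≤ i - 2
        obtain ⟨m, hm⟩ := IH j (by omega) (by omega)
        obtain ⟨n, hn⟩ := IH (i - j) (by omega) (by omega)
        refine ⟨16 * (2 - 2 * (j : ℤ)) * (2 - 2 * (i : ℤ) + 2 * (j : ℤ))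
          * (1 - 2 * (k : ℤ) + 2 * (i : ℤ)) * m * n, ?_⟩
        rw [e1, hm, hn, h1]; push_cast; ring
    · -- 2 ≤ k - i, so σ (k - i) integral
      obtain ⟨p, hp⟩ := IH (k - i) (by omega) (by omega)
      by_cases hj0 : j = 0
      · subst hj0
        obtain ⟨m, hm⟩ := IH i (by omega) hi2
        have e2 : i - 0 = i := by omega
        refine ⟨8 * (2 - 2 * (i : ℤ)) * (1 - 2 * (k : ℤ) + 2 * (i : ℤ)) * m * p, ?_⟩
        rw [e2, hm, hp, h0]; push_cast; ring
      by_cases hji : j = i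
      · subst hji
        obtain ⟨m, hm⟩ := IH j (by omega) (by omega)
        have e2 : j - j = 0 := by omega
        refine ⟨8 * (2 - 2 * (j : ℤ)) * (1 - 2 * (k : ℤ) + 2 * (j : ℤ)) * m * p, ?_⟩
        rw [e2, hm, hp, h0]; push_cast; ring
      · obtain ⟨m, hm⟩ := IH j (by omega) (by omega)
        obtain ⟨n, hn⟩ := IH (i - j) (by omega) (by omega)
        refine ⟨64 * (2 - 2 * (j : ℤ)) * (2 - 2 * (i : ℤ) + 2 * (j : ℤ))
          * (1 - 2 * (k : ℤ) + 2 * (i : ℤ)) * m * n * p, ?_⟩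
        rw [hm, hn, hp]; push_cast; ring
end

section
/- Let ℏ, μ, f_ξ, f_η ∈ ℂ with μ ≠ 0, let ξ ≠ η be complex numbers, let R₀, C_ξ, C_η be 2×2 complex matrices, and set R_ζ = (ζ/2)σ₃ + R₀ for ζ ∈ {ξ, η}. Assume M_ζ = (1/2)I₂ + (f_ζ/μ) R_ζ − ℏ C_ζ for ζ ∈ {ξ, η}. Then [ M_η/(ξ−η) + (f_η/(2μ)) σ₃ , M_ξ ] = −ℏ ( (f_η/(μ(ξ−η))) [R_ξ, C_ξ] + (1/(ξ−η)) [C_η, M_ξ] ). In particular, the left-hand side, which is the action of the insertion operator δ_η on M(ξ), is proportional to ℏ. -/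
open Matrix

noncomputable section

/-- The diagonal Pauli matrix σ₃. -/
def sigma3 : Matrix (Fin 2) (Fin 2) ℂ := !![1, 0; 0, -1]

/-- The action of the insertion operator δ_η on the projector M(ξ),
δ_η M(ξ) = [M(η)/(ξ−η) + (f(η)/(2μ))σ₃, M(ξ)], is proportional to ℏ:
it equals −ℏ((f_η/(μ(ξ−η)))[R_ξ, C_ξ] + (1/(ξ−η))[C_η, M_ξ]). -/
theorem statement19
    (ℏ μ fξ fη : ℂ) (hℏ : ℏ ≠ 0) (hμ : μ ≠ 0)
    (ξ η : ℂ) (hne : ξ ≠ η)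
    (R₀ Cξ Cη Mξ Mη Rξ Rη : Matrix (Fin 2) (Fin 2) ℂ)
    (hRξ : Rξ = (ξ / 2) • sigma3 + R₀)
    (hRη : Rη = (η / 2) • sigma3 + R₀)
    (hMξ : Mξ = (1 / 2 : ℂ) • (1 : Matrix (Fin 2) (Fin 2) ℂ) + (fξ / μ) • Rξ - ℏ • Cξ)
    (hMη : Mη = (1 / 2 : ℂ) • (1 : Matrix (Fin 2) (Fin 2) ℂ) + (fη / μ) • Rη - ℏ • Cη) :
    ((ξ - η)⁻¹ • Mη + (fη / (2 * μ)) • sigma3) * Mξ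
        - Mξ * ((ξ - η)⁻¹ • Mη + (fη / (2 * μ)) • sigma3)
      = (-ℏ) • ((fη / (μ * (ξ - η))) • (Rξ * Cξ - Cξ * Rξ)
          + (ξ - η)⁻¹ • (Cη * Mξ - Mξ * Cη)) := by
  have hd : ξ - η ≠ 0 := sub_ne_zero.mpr hne
  set N : Matrix (Fin 2) (Fin 2) ℂ :=
    (1 / 2 : ℂ) • (1 : Matrix (Fin 2) (Fin 2) ℂ) + (fη / μ) • Rξ - ℏ • Cη with hN
  have key : (ξ - η)⁻¹ • Mη + (fη / (2 * μ)) • sigma3 = (ξ - η)⁻¹ • N := by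
    rw [hN, hMη, hRξ, hRη]
    match_scalars <;> (field_simp; try ring)
  rw [key]
  have lhs_eq : ((ξ - η)⁻¹ • N) * Mξ - Mξ * ((ξ - η)⁻¹ • N)
      = (ξ - η)⁻¹ • (N * Mξ - Mξ * N) := by
    rw [smul_mul_assoc, mul_smul_comm, smul_sub]
  rw [lhs_eq]
  have rhs_eq : (-ℏ) • ((fη / (μ * (ξ - η))) • (Rξ * Cξ - Cξ * Rξ)
        + (ξ - η)⁻¹ • (Cη * Mξ - Mξ * Cη))
      = (ξ - η)⁻¹ • ((-ℏ) • ((fη / μ) • (Rξ * Cξ - Cξ * Rξ) + (Cη * Mξ - Mξ * Cη))) := by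
    have hs : fη / (μ * (ξ - η)) = (ξ - η)⁻¹ * (fη / μ) := by
      field_simp
    rw [hs, mul_smul, ← smul_add, smul_comm]
  rw [rhs_eq]
  congr 1
  rw [hN, hMξ]
  simp only [mul_add, add_mul, mul_sub, sub_mul, smul_mul_assoc, mul_smul_comm,
    smul_smul, one_mul, mul_one, smul_sub, smul_add]
  module
end
end
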